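/- Let p be a prime with p ≡ 3 (mod 8), let Q be the set of nonzero quadratic residues mod p and N the set of non-residues, and let r_Q = ∑_{a∈Q} x^a, r_N = ∑_{b∈N} x^b in 𝔽₂[x]/(x^p − 1). Then r_Q² = r_N and r_Q · r_N = 1 (i.e. r_Q is invertible with inverse r_N). -/

import Mathlib

open Classical in
/-- `r_T = ∑_{a ∈ T} x^a` in the group algebra `𝔽₂[x]/(x^p − 1) ≅ 𝔽₂[ℤ/pℤ]`,
where `T` is the set of elements of `ZMod p` satisfying a predicate. -/
noncomputable def rT (p : ℕ) [NeZero p] (P : ZMod p → Prop) :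
    AddMonoidAlgebra (ZMod 2) (ZMod p) :=
  ∑ a ∈ Finset.univ.filter P, AddMonoidAlgebra.single a 1

open Finset AddMonoidAlgebra

theorem stmt14 (p : ℕ) [Fact p.Prime] (hp : p % 8 = 3) :
    (rT p (fun a => a ≠ 0 ∧ IsSquare a)) ^ 2 = rT p (fun b => b ≠ 0 ∧ ¬ IsSquare b) ∧
    (rT p (fun a => a ≠ 0 ∧ IsSquare a)) * rT p (fun b => b ≠ 0 ∧ ¬ IsSquare b) = 1 := by
  classical
  have hpp : p.Prime := Fact.out
  have hp2 : p ≠ 2 := by omega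
  haveI : NeZero p := ⟨hpp.ne_zero⟩
  set R := AddMonoidAlgebra (ZMod 2) (ZMod p) with hR
  haveI : CharP R 2 := charP_of_injective_algebraMap' (ZMod 2) (A := R) 2
  -- 2 is not a square
  have h2ns : ¬ IsSquare (2 : ZMod p) := by
    rw [ZMod.exists_sq_eq_two_iff hp2]; omega
  have h2ne : (2 : ZMod p) ≠ 0 := by
    intro h
    have h' : ((2 : ℕ) : ZMod p) = 0 := by exact_mod_cast h
    rw [ZMod.natCast_eq_zero_iff] at h'
    have := Nat.le_of_dvd (by norm_num) h'
    omega
  -- product facts via quadraticChar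
  have hmul : ∀ a b : ZMod p, a ≠ 0 → b ≠ 0 →
      (IsSquare (a * b) ↔ (IsSquare a ↔ IsSquare b)) := by
    intro a b ha hb
    have hab : a * b ≠ 0 := mul_ne_zero ha hb
    rw [← quadraticChar_one_iff_isSquare hab, map_mul,
      ← quadraticChar_one_iff_isSquare ha, ← quadraticChar_one_iff_isSquare hb]
    rcases quadraticChar_dichotomy ha with h1 | h1 <;>
      rcases quadraticChar_dichotomy hb with h2 | h2 <;>
      simp [h1, h2]
  set Qs : Finset (ZMod p) := univ.filter (fun a => a ≠ 0 ∧ IsSquare a) with hQs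
  set Ns : Finset (ZMod p) := univ.filter (fun b => b ≠ 0 ∧ ¬ IsSquare b) with hNs
  set u : R := rT p (fun a => a ≠ 0 ∧ IsSquare a) with hu
  set v : R := rT p (fun b => b ≠ 0 ∧ ¬ IsSquare b) with hv
  set j : R := ∑ a : ZMod p, AddMonoidAlgebra.single a 1 with hj
  have hQmem : ∀ a : ZMod p, a ∈ Qs ↔ a ≠ 0 ∧ IsSquare a := by
    intro a; simp [hQs]
  have hNmem : ∀ a : ZMod p, a ∈ Ns ↔ a ≠ 0 ∧ ¬ IsSquare a := by
    intro a; simp [hNs]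
  have hu' : u = ∑ a ∈ Qs, AddMonoidAlgebra.single a (1 : ZMod 2) := by
    rw [hu]; unfold rT; rw [hQs]; congr 1; apply Finset.filter_congr_decidable
  have hv' : v = ∑ b ∈ Ns, AddMonoidAlgebra.single b (1 : ZMod 2) := by
    rw [hv]; unfold rT; rw [hNs]; congr 1; apply Finset.filter_congr_decidable
  -- key surjectivity fact
  have hsurj : ∀ b : ZMod p, b ∈ Ns → 2⁻¹ * b ∈ Qs := by
    intro b hb
    rw [hNmem] at hb
    have h2ine : (2⁻¹ : ZMod p) ≠ 0 := inv_ne_zero h2ne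
    rw [hQmem]
    refine ⟨mul_ne_zero h2ine hb.1, ?_⟩
    by_contra hns
    have ha0 : (2⁻¹ * b : ZMod p) ≠ 0 := mul_ne_zero h2ine hb.1
    have hsb : IsSquare (2 * (2⁻¹ * b)) := (hmul 2 _ h2ne ha0).mpr (by tauto)
    have hbb : 2 * (2⁻¹ * b : ZMod p) = b := by field_simp
    exact hb.2 (hbb ▸ hsb)
  have hinj : ∀ a : ZMod p, a ∈ Qs → 2 * a ∈ Ns := by
    intro a ha
    rw [hQmem] at ha
    rw [hNmem]
    refine ⟨mul_ne_zero h2ne ha.1, ?_⟩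
    intro hs
    rw [hmul 2 a h2ne ha.1] at hs
    exact h2ns (hs.mpr ha.2)
  -- u ^ 2 = v
  have hsq : u ^ 2 = v := by
    rw [hu', hv', sum_pow_char]
    refine Finset.sum_nbij' (fun a => 2 * a) (fun b => 2⁻¹ * b) hinj hsurj ?_ ?_ ?_
    · intro a _; field_simp
    · intro b _; field_simp
    · intro a _
      rw [pow_two, AddMonoidAlgebra.single_mul_single, mul_one]
      congr 1
      show a + a = 2 * a
      ring
  -- u * j = j
  have hcard : 2 * Qs.card = p - 1 := by
    have hbij : Qs.card = Ns.card := by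
      refine Finset.card_nbij (fun a => 2 * a) hinj ?_ ?_
      · intro a _ b _ h
        exact mul_left_cancel₀ h2ne (by simpa using h)
      · intro b hb
        rw [Finset.mem_coe] at hb
        exact ⟨2⁻¹ * b, Finset.mem_coe.mpr (hsurj b hb), by field_simp⟩
    have hdisj : Disjoint Qs Ns := by
      rw [Finset.disjoint_left]
      intro a ha hb
      rw [hQmem] at ha; rw [hNmem] at hb; tauto
    have hunion : Qs ∪ Ns = univ \ {0} := by
      ext a
      simp only [Finset.mem_union, hQmem, hNmem, Finset.mem_sdiff, Finset.mem_univ,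
        Finset.mem_singleton, true_and]
      tauto
    have hcardu : (Qs ∪ Ns).card = p - 1 := by
      rw [hunion, Finset.card_sdiff_of_subset (by simp), Finset.card_singleton, Finset.card_univ,
        ZMod.card]
    rw [Finset.card_union_of_disjoint hdisj, ← hbij] at hcardu
    omega
  have hQodd : Qs.card % 2 = 1 := by omega
  have huj : u * j = j := by
    rw [hu', hj, Finset.sum_mul]
    have hterm : ∀ a ∈ Qs, (AddMonoidAlgebra.single a (1 : ZMod 2)) *
        (∑ c : ZMod p, AddMonoidAlgebra.single c (1 : ZMod 2))
        = ∑ c : ZMod p, AddMonoidAlgebra.single c (1 : ZMod 2) := by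
      intro a _
      rw [Finset.mul_sum]
      refine Finset.sum_nbij' (fun c => a + c) (fun c => c - a) (by simp) (by simp)
        (by intro c _; ring) (by intro c _; ring) ?_
      intro c _
      rw [AddMonoidAlgebra.single_mul_single, mul_one]
    rw [Finset.sum_congr rfl hterm, Finset.sum_const, nsmul_eq_mul]
    have hc1 : ((Qs.card : R)) = 1 := by
      obtain ⟨k, hk⟩ : ∃ k, Qs.card = 2 * k + 1 := ⟨Qs.card / 2, by omega⟩
      have h2 : ((2 : ℕ) : R) = 0 := by exact_mod_cast CharP.cast_eq_zero R 2
      rw [hk]; push_cast at h2 ⊢; rw [h2]; ring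
    rw [hc1, one_mul]
  -- j = u + v + 1
  have hpart : j = u + v + 1 := by
    rw [hu', hv', hj]
    have hdisj : Disjoint Qs Ns := by
      rw [Finset.disjoint_left]
      intro a ha hb
      rw [hQmem] at ha; rw [hNmem] at hb; tauto
    rw [← Finset.sum_union hdisj]
    have hone : (1 : R) = AddMonoidAlgebra.single (0 : ZMod p) (1 : ZMod 2) :=
      AddMonoidAlgebra.one_def
    rw [hone, ← Finset.sum_singleton (fun a => AddMonoidAlgebra.single a (1 : ZMod 2)) 0,
      ← Finset.sum_union]
    · apply Finset.sum_congr _ (fun _ _ => rfl)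
      ext a
      simp only [Finset.mem_union, hQmem, hNmem, Finset.mem_singleton, Finset.mem_univ, iff_true]
      by_cases h : a = 0 <;> tauto
    · rw [Finset.disjoint_right]
      intro a ha hb
      rw [Finset.mem_singleton] at ha
      rw [Finset.mem_union, hQmem, hNmem] at hb
      tauto
  constructor
  · exact hsq
  · linear_combination (1 - u) * hpart + huj - hsq
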